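/- Let G be a bipartite graph with parts A, B partitioned as A = A_1 ∪ ... ∪ A_k, B = B_1 ∪ ... ∪ B_l, such that in each nonempty induced subgraph G[A_i, B_j] all vertices of A_i have equal degree and all vertices of B_j have equal degree. Define the reduced graph H' on [k] ∪ [l] where i ~ j iff G[A_i, B_j] has an edge. If for every subset X ⊆ [k], ∑_{j ∈ N_{H'}(X)} |B_j| ≥ ∑_{i ∈ X} |A_i|, then G has a matching saturating A. -/

import Mathlib

open scoped Classical
open Finset



private lemma key_aux (k l : ℕ) (R : Fin k → Fin l → Prop)
    (A : Fin k → ℚ) (B : Fin l → ℚ) (hB : ∀ j, 0 ≤ B j)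
    (hall : ∀ X : Finset (Fin k),
      ∑ i ∈ X, A i ≤ ∑ j ∈ univ.filter (fun j => ∃ i ∈ X, R i j), B j) :
    ∀ m : ℕ, ∀ (s : Fin k → ℚ) (n : Fin l → ℚ),
      (∀ j, 0 ≤ n j) → (∀ i, 0 ≤ s i) → (∀ i, s i ≤ A i) →
      (∀ i j, R i j → s i * B j ≤ n j * A i) →
      (univ.filter (fun i => 0 < s i)).card ≤ m →
      ∑ i, s i ≤ ∑ j, n j := by
  intro m
  induction m with
  | zero =>
    intro s n hn hs0 hsA _ hcard
    have hP : univ.filter (fun i => 0 < s i) = ∅ := card_eq_zero.mp (Nat.le_zero.mp hcard)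
    have hz : ∀ i, s i = 0 := by
      intro i
      by_contra h
      have : i ∈ univ.filter (fun i => 0 < s i) := by
        simp [lt_of_le_of_ne (hs0 i) (Ne.symm h)]
      simp [hP] at this
    calc ∑ i, s i = 0 := by simp [hz]
      _ ≤ ∑ j, n j := Finset.sum_nonneg fun j _ => hn j
  | succ m ih =>
    intro s n hn hs0 hsA loc hcard
    set P := univ.filter (fun i => 0 < s i) with hPdef
    by_cases hPe : P = ∅
    · have hz : ∀ i, s i = 0 := by
        intro i
        by_contra h
        have : i ∈ P := by simp [hPdef, lt_of_le_of_ne (hs0 i) (Ne.symm h)]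
        simp [hPe] at this
      calc ∑ i, s i = 0 := by simp [hz]
        _ ≤ ∑ j, n j := Finset.sum_nonneg fun j _ => hn j
    · have hPne : P.Nonempty := nonempty_of_ne_empty hPe
      have hmemP : ∀ i, i ∈ P ↔ 0 < s i := by intro i; simp [hPdef]
      have hApos : ∀ i ∈ P, 0 < A i := fun i hi =>
        lt_of_lt_of_le ((hmemP i).mp hi) (hsA i)
      set t := P.inf' hPne (fun i => s i / A i) with htdef
      obtain ⟨i₀, hi₀P, hi₀⟩ := Finset.exists_mem_eq_inf' hPne (fun i => s i / A i)
      have ht_le : ∀ i ∈ P, t * A i ≤ s i := by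
        intro i hi
        have h1 : t ≤ s i / A i := Finset.inf'_le _ hi
        rw [le_div_iff₀ (hApos i hi)] at h1
        exact h1
      have htpos : 0 < t := by
        rw [htdef, hi₀]
        exact div_pos ((hmemP i₀).mp hi₀P) (hApos i₀ hi₀P)
      set N := univ.filter (fun j => ∃ i ∈ P, R i j) with hNdef
      have hnN : ∀ j ∈ N, t * B j ≤ n j := by
        intro j hj
        rw [hNdef, mem_filter] at hj
        obtain ⟨-, i, hiP, hij⟩ := hj
        have h1 : s i * B j ≤ n j * A i := loc i j hij
        have h2 : t * A i * B j ≤ s i * B j :=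
          mul_le_mul_of_nonneg_right (ht_le i hiP) (hB j)
        have h3 : t * B j * A i ≤ n j * A i := by nlinarith
        exact le_of_mul_le_mul_right h3 (hApos i hiP)
      set s' : Fin k → ℚ := fun i => if 0 < s i then s i - t * A i else 0 with hs'def
      set n' : Fin l → ℚ := fun j => if j ∈ N then n j - t * B j else n j with hn'def
      -- hypotheses for s', n'
      have hs'0 : ∀ i, 0 ≤ s' i := by
        intro i
        simp only [hs'def]
        split
        · next h => 
          have := ht_le i ((hmemP i).mpr h)
          linarith
        · exact le_rfl
      have hs'A : ∀ i, s' i ≤ A i := by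
        intro i
        simp only [hs'def]
        split
        · next h =>
          have := mul_nonneg htpos.le (le_trans (hs0 i) (hsA i))
          have := hsA i
          linarith
        · exact le_trans (hs0 i) (hsA i)
      have hn'0 : ∀ j, 0 ≤ n' j := by
        intro j
        simp only [hn'def]
        split
        · next h =>
          have h1 := hnN j h
          have h2 := mul_nonneg htpos.le (hB j)
          linarith
        · exact hn j
      have loc' : ∀ i j, R i j → s' i * B j ≤ n' j * A i := by
        intro i j hij
        by_cases hi : 0 < s i
        · have hjN : j ∈ N := by
            rw [hNdef, mem_filter]
            exact ⟨mem_univ j, i, (hmemP i).mpr hi, hij⟩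
          have h1 := loc i j hij
          simp only [hs'def, hn'def, if_pos hi, if_pos hjN]
          nlinarith
        · have : s' i = 0 := by simp only [hs'def]; rw [if_neg hi]
          rw [this, zero_mul]
          exact mul_nonneg (hn'0 j) (le_trans (hs0 i) (hsA i))
      -- measure decreases
      have hs'i₀ : s' i₀ = 0 := by
        simp only [hs'def]
        rw [if_pos ((hmemP i₀).mp hi₀P), htdef, hi₀, div_mul_cancel₀]
        · ring
        · exact (hApos i₀ hi₀P).ne'
      have hsub : univ.filter (fun i => 0 < s' i) ⊆ P.erase i₀ := by
        intro i hi
        rw [mem_filter] at hi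
        have hi' := hi.2
        rw [mem_erase]
        constructor
        · rintro rfl; rw [hs'i₀] at hi'; exact lt_irrefl _ hi'
        · rw [hmemP]
          by_contra h
          simp only [hs'def] at hi'
          rw [if_neg h] at hi'
          exact lt_irrefl _ hi'
      have hcard' : (univ.filter (fun i => 0 < s' i)).card ≤ m := by
        calc (univ.filter (fun i => 0 < s' i)).card ≤ (P.erase i₀).card :=
              card_le_card hsub
          _ = P.card - 1 := card_erase_of_mem hi₀P
          _ ≤ m := by omega
      have hIH := ih s' n' hn'0 hs'0 hs'A loc' hcard'
      -- reassemble sums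
      have hsum_s : ∑ i, s i = ∑ i, s' i + t * ∑ i ∈ P, A i := by
        rw [Finset.mul_sum]
        rw [← Finset.sum_filter_add_sum_filter_not univ (fun i => 0 < s i) s,
            ← Finset.sum_filter_add_sum_filter_not univ (fun i => 0 < s i) s']
        have e1 : ∑ i ∈ univ.filter (fun i => ¬ 0 < s i), s i = 0 := by
          apply Finset.sum_eq_zero
          intro i hi
          rw [mem_filter] at hi
          exact le_antisymm (not_lt.mp hi.2) (hs0 i)
        have e2 : ∑ i ∈ univ.filter (fun i => ¬ 0 < s i), s' i = 0 := by
          apply Finset.sum_eq_zero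
          intro i hi
          rw [mem_filter] at hi
          simp only [hs'def]; rw [if_neg hi.2]
        rw [e1, e2]
        have e3 : ∑ i ∈ P, s' i = ∑ i ∈ P, (s i - t * A i) := by
          apply Finset.sum_congr rfl
          intro i hi
          simp only [hs'def]; rw [if_pos ((hmemP i).mp hi)]
        rw [e3, Finset.sum_sub_distrib]
        ring
      have hsum_n : ∑ j, n j = ∑ j, n' j + ∑ j ∈ N, t * B j := by
        rw [← Finset.sum_filter_add_sum_filter_not univ (fun j => j ∈ N) n,
            ← Finset.sum_filter_add_sum_filter_not univ (fun j => j ∈ N) n']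
        have hNf : univ.filter (fun j => j ∈ N) = N := by
          ext j; simp [hNdef]
        rw [hNf]
        have e2 : ∑ j ∈ univ.filter (fun j => ¬ j ∈ N), n' j
            = ∑ j ∈ univ.filter (fun j => ¬ j ∈ N), n j := by
          apply Finset.sum_congr rfl
          intro j hj
          rw [mem_filter] at hj
          simp only [hn'def]; rw [if_neg hj.2]
        rw [e2]
        have e3 : ∑ j ∈ N, n' j = ∑ j ∈ N, (n j - t * B j) := by
          apply Finset.sum_congr rfl
          intro j hj
          simp only [hn'def]; rw [if_pos hj]
        rw [e3, Finset.sum_sub_distrib]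
        ring
      have hhallP := hall P
      have hBN : ∑ j ∈ N, t * B j = t * ∑ j ∈ N, B j := by rw [Finset.mul_sum]
      rw [hsum_s, hsum_n, hBN]
      have := mul_le_mul_of_nonneg_left hhallP htpos.le
      rw [hNdef]
      linarith [hIH, this]

private lemma swap_count {α β : Type} [Fintype α] [Fintype β] {l : ℕ}
    (E : α → β → Prop) (pB : β → Fin l) (T : Finset α) (j : Fin l) :
    ∑ a ∈ T, (univ.filter (fun b => pB b = j ∧ E a b)).card
      = ∑ b ∈ univ.filter (fun b => pB b = j), (T.filter (fun a => E a b)).card := by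
  simp only [Finset.card_filter, Finset.sum_filter]
  rw [Finset.sum_comm]
  refine Finset.sum_congr rfl fun b _ => ?_
  by_cases h : pB b = j <;> simp [h]


theorem stmt_5 (α β : Type) [Fintype α] [Fintype β] (k l : ℕ)
    (E : α → β → Prop) (pA : α → Fin k) (pB : β → Fin l)
    (hregA : ∀ (i : Fin k) (j : Fin l) (a a' : α), pA a = i → pA a' = i →
      (Finset.univ.filter (fun b => pB b = j ∧ E a b)).card =
        (Finset.univ.filter (fun b => pB b = j ∧ E a' b)).card)
    (hregB : ∀ (i : Fin k) (j : Fin l) (b b' : β), pB b = j → pB b' = j →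
      (Finset.univ.filter (fun a => pA a = i ∧ E a b)).card =
        (Finset.univ.filter (fun a => pA a = i ∧ E a b')).card)
    (hhall : ∀ X : Finset (Fin k),
      ∑ i ∈ X, (Finset.univ.filter (fun a : α => pA a = i)).card ≤
        ∑ j ∈ Finset.univ.filter
            (fun j : Fin l => ∃ i ∈ X, ∃ a b, pA a = i ∧ pB b = j ∧ E a b),
          (Finset.univ.filter (fun b : β => pB b = j)).card) :
    ∃ f : α → β, Function.Injective f ∧ ∀ a, E a (f a) := by
  classical
  have hmain : ∀ S : Finset α,
      S.card ≤ (S.biUnion (fun a : α => univ.filter (fun b => E a b))).card := ?_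
  · obtain ⟨f, hfinj, hfmem⟩ := (Finset.all_card_le_biUnion_card_iff_exists_injective
      (fun a : α => univ.filter (fun b => E a b))).mp hmain
    exact ⟨f, hfinj, fun a => by simpa using hfmem a⟩
  intro S
  set N := S.biUnion (fun a : α => univ.filter (fun b => E a b)) with hNdef
  set R : Fin k → Fin l → Prop := fun i j => ∃ a b, pA a = i ∧ pB b = j ∧ E a b with hRdef
  set Ac : Fin k → ℕ := fun i => (univ.filter (fun a => pA a = i)).card with hAc
  set Bc : Fin l → ℕ := fun j => (univ.filter (fun b => pB b = j)).card with hBc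
  set sc : Fin k → ℕ := fun i => (S.filter (fun a => pA a = i)).card with hsc
  set nc : Fin l → ℕ := fun j => (N.filter (fun b => pB b = j)).card with hnc
  -- local inequality in ℕ
  have loc : ∀ i j, R i j → sc i * Bc j ≤ nc j * Ac i := by
    intro i j hij
    obtain ⟨a₀, b₀, ha₀, hb₀, hE₀⟩ := hij
    set dA : ℕ := (univ.filter (fun b => pB b = j ∧ E a₀ b)).card with hdA
    set dB : ℕ := (univ.filter (fun a => pA a = i ∧ E a b₀)).card with hdB
    have hdBpos : 0 < dB := by
      rw [hdB, Finset.card_pos]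
      exact ⟨a₀, by simp [ha₀, hE₀]⟩
    have degsum : ∀ T : Finset α, (∀ a ∈ T, pA a = i) →
        ∑ a ∈ T, (univ.filter (fun b => pB b = j ∧ E a b)).card = T.card * dA := by
      intro T hT
      rw [Finset.sum_congr rfl (fun a ha => hregA i j a a₀ (hT a ha) ha₀)]
      rw [Finset.sum_const, smul_eq_mul]
    have hBfix : ∀ T : Finset α, (∀ a ∈ T, pA a = i) → ∀ b, pB b = j →
        T.filter (fun a => E a b) ⊆ univ.filter (fun a => pA a = i ∧ E a b) := by
      intro T hT b _ a ha
      rw [Finset.mem_filter] at ha ⊢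
      exact ⟨Finset.mem_univ a, hT a ha.1, ha.2⟩
    have hdBall : ∀ b, pB b = j →
        (univ.filter (fun a => pA a = i ∧ E a b)).card = dB := by
      intro b hb
      rw [hdB]
      exact hregB i j b b₀ hb hb₀
    -- total double count : Ac i * dA = Bc j * dB
    have htotal : Ac i * dA = Bc j * dB := by
      have h1 := degsum (univ.filter (fun a => pA a = i))
        (fun a ha => (Finset.mem_filter.mp ha).2)
      have h2 := swap_count E pB (univ.filter (fun a => pA a = i)) j
      rw [h2] at h1
      have h3 : ∑ b ∈ univ.filter (fun b => pB b = j),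
          ((univ.filter (fun a => pA a = i)).filter (fun a => E a b)).card
          = ∑ b ∈ univ.filter (fun b => pB b = j), dB := by
        refine Finset.sum_congr rfl fun b hb => ?_
        have hb' : pB b = j := (Finset.mem_filter.mp hb).2
        rw [← hdBall b hb']
        congr 1
        rw [Finset.filter_filter]
      rw [h3, Finset.sum_const, smul_eq_mul] at h1
      rw [← h1]
    -- S-side count
    have hScount : sc i * dA ≤ nc j * dB := by
      have h1 := degsum (S.filter (fun a => pA a = i))
        (fun a ha => (Finset.mem_filter.mp ha).2)
      have h2 := swap_count E pB (S.filter (fun a => pA a = i)) j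
      rw [h2] at h1
      simp only [hsc]
      rw [← h1]
      have hsplit : univ.filter (fun b => pB b = j)
          = (univ.filter (fun b => pB b = j)).filter (fun b => b ∈ N)
            ∪ (univ.filter (fun b => pB b = j)).filter (fun b => ¬ b ∈ N) :=
        (Finset.filter_union_filter_not_eq _ _).symm
      rw [hsplit, Finset.sum_union (Finset.disjoint_filter_filter_not _ _ _)]
      have hzero : ∑ b ∈ (univ.filter (fun b => pB b = j)).filter (fun b => ¬ b ∈ N),
          ((S.filter (fun a => pA a = i)).filter (fun a => E a b)).card = 0 := by
        refine Finset.sum_eq_zero fun b hb => ?_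
        rw [Finset.mem_filter] at hb
        rw [Finset.card_eq_zero, Finset.filter_eq_empty_iff]
        intro a ha
        simp only [Finset.mem_filter] at ha
        intro hab
        exact hb.2 (by
          rw [hNdef, Finset.mem_biUnion]
          exact ⟨a, ha.1, by simp [hab]⟩)
      rw [hzero, add_zero]
      calc ∑ b ∈ (univ.filter (fun b => pB b = j)).filter (fun b => b ∈ N),
            ((S.filter (fun a => pA a = i)).filter (fun a => E a b)).card
          ≤ ∑ b ∈ (univ.filter (fun b => pB b = j)).filter (fun b => b ∈ N), dB := by
            refine Finset.sum_le_sum fun b hb => ?_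
            rw [Finset.mem_filter, Finset.mem_filter] at hb
            rw [← hdBall b hb.1.2]
            exact Finset.card_le_card
              (hBfix _ (fun a ha => (Finset.mem_filter.mp ha).2) b hb.1.2)
        _ = nc j * dB := by
            rw [Finset.sum_const, smul_eq_mul]
            simp only [hnc]
            congr 2
            ext b
            simp only [Finset.mem_filter, Finset.mem_univ, true_and]
            exact and_comm
    -- combine
    have hmain : sc i * Bc j * dB ≤ nc j * Ac i * dB := by
      have h1 : sc i * Bc j * dB = sc i * dA * Ac i := by
        rw [mul_assoc, ← htotal]; ring
      have h2 : sc i * dA * Ac i ≤ nc j * dB * Ac i :=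
        Nat.mul_le_mul_right _ hScount
      have h3 : nc j * dB * Ac i = nc j * Ac i * dB := by ring
      omega
    exact Nat.le_of_mul_le_mul_right hmain hdBpos
  -- hall condition in ℚ
  have hscA : ∀ i, sc i ≤ Ac i := by
    intro i
    apply Finset.card_le_card
    intro a ha
    rw [Finset.mem_filter] at ha ⊢
    exact ⟨Finset.mem_univ a, ha.2⟩
  have hkey := key_aux k l R (fun i => (Ac i : ℚ)) (fun j => (Bc j : ℚ))
    (fun j => by positivity) ?_ (Finset.univ.filter (fun i => 0 < ((sc i : ℚ)))).card
    (fun i => (sc i : ℚ)) (fun j => (nc j : ℚ))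
    (fun j => by positivity) (fun i => by positivity)
    (fun i => by show ((sc i : ℚ)) ≤ ((Ac i : ℚ)); exact_mod_cast hscA i)
    (fun i j hij => by
      show ((sc i : ℚ)) * ((Bc j : ℚ)) ≤ ((nc j : ℚ)) * ((Ac i : ℚ))
      exact_mod_cast loc i j hij)
    le_rfl
  have hS : (S.card : ℚ) = ∑ i, (sc i : ℚ) := by
    rw [hsc]
    push_cast
    exact_mod_cast Finset.card_eq_sum_card_fiberwise
      (f := pA) (s := S) (t := univ) (fun a _ => Finset.mem_univ _)
  have hN : (N.card : ℚ) = ∑ j, (nc j : ℚ) := by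
    rw [hnc]
    push_cast
    exact_mod_cast Finset.card_eq_sum_card_fiberwise
      (f := pB) (s := N) (t := univ) (fun b _ => Finset.mem_univ _)
  have : (S.card : ℚ) ≤ (N.card : ℚ) := by rw [hS, hN]; exact hkey
  exact_mod_cast this
  case _ =>
    intro X
    have h := hhall X
    have hq : ((∑ i ∈ X, Ac i : ℕ) : ℚ) ≤ ((∑ j ∈ univ.filter
        (fun j : Fin l => ∃ i ∈ X, ∃ a b, pA a = i ∧ pB b = j ∧ E a b), Bc j : ℕ) : ℚ) :=
      Nat.cast_le.mpr h
    push_cast at hq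
    convert hq using 2
    ext j
    simp [hRdef]
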